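/- Let n ≥ 1, let A be an n×n real matrix with ‖A‖_∞ ≤ ρ := 1 − α d_min(1−γ), let x₀ ∈ ℝⁿ, and let (W_k)_{k≥0} be symmetric positive semidefinite n×n matrices with λ_max(W_k) ≤ 9/(1−γ)² for all k. Define X₀ := x₀x₀ᵀ and X_{k+1} := A X_k Aᵀ + α² W_k for k ≥ 0. Then for all k ≥ 0, tr(X_k) ≤ 9 n² α / (d_min (1−γ)³) + ‖x₀‖₂² n² ρ^{2k}. -/

import Mathlib

open Matrix

set_option maxHeartbeats 1000000

/-- Bounded trace of the autocorrelation recursion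
`X₀ = x₀x₀ᵀ`, `X_{k+1} = A X_k Aᵀ + α² W_k`, where `‖A‖_∞ ≤ ρ := 1 − α d_min (1−γ)` and
the symmetric PSD matrices `W_k` satisfy `λ_max(W_k) ≤ 9/(1−γ)²`:
`tr(X_k) ≤ 9 n² α / (d_min (1−γ)³) + ‖x₀‖₂² n² ρ^{2k}`. -/
theorem autocorrelation_trace_bound
    (n : ℕ) (hn : 1 ≤ n)
    (α γ dmin : ℝ) (hα : 0 < α ∧ α < 1) (hγ : 0 ≤ γ ∧ γ < 1) (hd : 0 < dmin ∧ dmin ≤ 1)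
    (A : Matrix (Fin n) (Fin n) ℝ)
    (hA : (⨆ i, ∑ j, |A i j|) ≤ 1 - α * dmin * (1 - γ))
    (x₀ : Fin n → ℝ)
    (W : ℕ → Matrix (Fin n) (Fin n) ℝ)
    (hWpsd : ∀ k, (W k).PosSemidef)
    (hWmax : ∀ k (v : Fin n → ℝ), ∑ i, v i ^ 2 = 1 → v ⬝ᵥ (W k).mulVec v ≤ 9 / (1 - γ) ^ 2)
    (X : ℕ → Matrix (Fin n) (Fin n) ℝ)
    (hX0 : X 0 = vecMulVec x₀ x₀)
    (hXrec : ∀ k, X (k + 1) = A * X k * Aᵀ + (α ^ 2) • W k) :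
    ∀ k, (X k).trace ≤
      9 * (n : ℝ) ^ 2 * α / (dmin * (1 - γ) ^ 3) +
        (∑ i, x₀ i ^ 2) * (n : ℝ) ^ 2 * (1 - α * dmin * (1 - γ)) ^ (2 * k) := by
  obtain ⟨hα0, hα1⟩ := hα
  obtain ⟨hγ0, hγ1⟩ := hγ
  obtain ⟨hd0, hd1⟩ := hd
  set ρ : ℝ := 1 - α * dmin * (1 - γ) with hρdef
  have h1γ : (0:ℝ) < 1 - γ := by linarith
  have hprod : 0 < α * dmin * (1 - γ) := by positivity
  have hprod1 : α * dmin * (1 - γ) ≤ 1 := by nlinarith [mul_pos hα0 hd0]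
  have hρ0 : 0 ≤ ρ := by rw [hρdef]; linarith
  have hρ1 : ρ < 1 := by rw [hρdef]; linarith
  have hNE : Nonempty (Fin n) := ⟨⟨0, hn⟩⟩
  set c : ℝ := 9 / (1 - γ) ^ 2 with hcdef
  set D : ℝ := 9 * α / (dmin * (1 - γ) ^ 3) with hDdef
  set S : ℝ := ∑ i, x₀ i ^ 2 with hSdef
  have hc0 : 0 ≤ c := by positivity
  have hD0 : 0 ≤ D := by positivity
  have hS0 : 0 ≤ S := Finset.sum_nonneg fun i _ => sq_nonneg _
  -- row sums of A
  have hrow : ∀ i, ∑ j, |A i j| ≤ ρ := fun i =>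
    le_trans (le_ciSup (f := fun i => ∑ j, |A i j|) (Set.Finite.bddAbove (Set.finite_range _)) i) hA
  -- diagonal entries of W
  have hWdiag : ∀ k i, W k i i ≤ c := by
    intro k i
    have h1 : ∑ t, (Pi.single i 1 : Fin n → ℝ) t ^ 2 = 1 := by
      simp [Pi.single_apply, Finset.sum_ite_eq']
    have := hWmax k (Pi.single i 1) h1
    simpa [single_dotProduct, mulVec_single] using this
  -- symmetry of W
  have hWsymm : ∀ k i j, W k j i = W k i j := by
    intro k i j
    simpa using (hWpsd k).1.apply i j
  -- entries of W
  have hWent : ∀ k i j, |W k i j| ≤ c := by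
    intro k i j
    rcases eq_or_ne i j with rfl | hij
    · rw [abs_le]
      constructor
      · have := ((hWpsd k).dotProduct_mulVec_nonneg (Pi.single i 1))
        simp only [star_trivial, single_dotProduct, mulVec_single, Pi.smul_apply, col_apply, op_smul_eq_mul, one_mul, mul_one] at this
        linarith [hWdiag k i]
      · exact hWdiag k i
    · have key : ∀ s : ℝ, 0 ≤ W k i i + 2 * s * W k i j + s ^ 2 * W k j j := by
        intro s
        have := (hWpsd k).dotProduct_mulVec_nonneg (Pi.single i 1 + Pi.single j s)
        simp only [star_trivial, mulVec_add, dotProduct_add, add_dotProduct,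
          single_dotProduct, mulVec_single, Pi.smul_apply, col_apply, op_smul_eq_mul, Pi.add_apply, Pi.single_apply,
          if_neg hij, if_neg (Ne.symm hij), if_pos rfl] at this
        have h := this
        rw [hWsymm k i j] at h
        nlinarith [h]
      have h1 := key 1
      have h2 := key (-1)
      have hii := hWdiag k i
      have hjj := hWdiag k j
      rw [abs_le]
      constructor <;> nlinarith
  -- key entrywise bound
  have key : ∀ k i j, |X k i j| ≤ S * ρ ^ (2 * k) + D := by
    intro k
    induction k with
    | zero =>
      intro i j
      rw [hX0]
      simp only [vecMulVec_apply, mul_zero, pow_zero, mul_one]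
      have h1 : |x₀ i * x₀ j| ≤ S := by
        rw [abs_mul]
        have hi : x₀ i ^ 2 ≤ S :=
          Finset.single_le_sum (f := fun t => x₀ t ^ 2) (fun t _ => sq_nonneg _) (Finset.mem_univ i)
        have hj : x₀ j ^ 2 ≤ S :=
          Finset.single_le_sum (f := fun t => x₀ t ^ 2) (fun t _ => sq_nonneg _) (Finset.mem_univ j)
        nlinarith [abs_nonneg (x₀ i), abs_nonneg (x₀ j), sq_abs (x₀ i), sq_abs (x₀ j),
          abs_mul_abs_self (x₀ i), abs_mul_abs_self (x₀ j)]
      linarith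
    | succ k ih =>
      intro i j
      set B : ℝ := S * ρ ^ (2 * k) + D with hBdef
      have hB0 : 0 ≤ B := by positivity
      rw [hXrec k]
      have hent : |(A * X k * Aᵀ) i j| ≤ ρ * B * ρ := by
        have hexp : (A * X k * Aᵀ) i j = ∑ q, (∑ p, A i p * X k p q) * A j q := by
          simp [Matrix.mul_apply, transpose_apply]
        rw [hexp]
        calc |∑ q, (∑ p, A i p * X k p q) * A j q|
            ≤ ∑ q, |(∑ p, A i p * X k p q) * A j q| := Finset.abs_sum_le_sum_abs _ _
          _ = ∑ q, |∑ p, A i p * X k p q| * |A j q| := by simp [abs_mul]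
          _ ≤ ∑ q, ((∑ p, |A i p|) * B) * |A j q| := by
              refine Finset.sum_le_sum fun q _ => mul_le_mul_of_nonneg_right ?_ (abs_nonneg _)
              calc |∑ p, A i p * X k p q| ≤ ∑ p, |A i p * X k p q| :=
                    Finset.abs_sum_le_sum_abs _ _
                _ = ∑ p, |A i p| * |X k p q| := by simp [abs_mul]
                _ ≤ ∑ p, |A i p| * B :=
                    Finset.sum_le_sum fun p _ =>
                      mul_le_mul_of_nonneg_left (ih p q) (abs_nonneg _)
                _ = (∑ p, |A i p|) * B := by rw [Finset.sum_mul]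
          _ = (∑ p, |A i p|) * B * (∑ q, |A j q|) := (Finset.mul_sum _ _ _).symm
          _ ≤ ρ * B * ρ := by
              have h1 := hrow i
              have h2 := hrow j
              have hr2 : 0 ≤ ∑ q, |A j q| := Finset.sum_nonneg fun q _ => abs_nonneg _
              have h3 : (∑ p, |A i p|) * (∑ q, |A j q|) ≤ ρ * ρ :=
                mul_le_mul h1 h2 hr2 hρ0
              have h4 : (∑ p, |A i p|) * (∑ q, |A j q|) * B ≤ ρ * ρ * B :=
                mul_le_mul_of_nonneg_right h3 hB0
              calc (∑ p, |A i p|) * B * (∑ q, |A j q|)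
                  = (∑ p, |A i p|) * (∑ q, |A j q|) * B := by ring
                _ ≤ ρ * ρ * B := h4
                _ = ρ * B * ρ := by ring
      have hW : |(α ^ 2 • W k) i j| ≤ α ^ 2 * c := by
        simp only [Matrix.smul_apply, smul_eq_mul, abs_mul, abs_pow, abs_of_pos hα0]
        exact mul_le_mul_of_nonneg_left (hWent k i j) (by positivity)
      have hsum : |(A * X k * Aᵀ + α ^ 2 • W k) i j| ≤ ρ * B * ρ + α ^ 2 * c := by
        calc |(A * X k * Aᵀ + α ^ 2 • W k) i j|
            ≤ |(A * X k * Aᵀ) i j| + |(α ^ 2 • W k) i j| := abs_add_le _ _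
          _ ≤ ρ * B * ρ + α ^ 2 * c := add_le_add hent hW
      refine hsum.trans ?_
      -- need: ρ * B * ρ + α² c ≤ S ρ^(2(k+1)) + D
      have hgeom : ρ ^ (2 * (k + 1)) = ρ ^ (2 * k) * ρ ^ 2 := by ring
      have hDineq : α ^ 2 * c ≤ (1 - ρ ^ 2) * D := by
        have heq : (1 - ρ) * D = α ^ 2 * c := by
          rw [hDdef, hcdef, hρdef]
          field_simp
          ring
        nlinarith [heq, mul_nonneg (mul_nonneg hρ0 (sub_nonneg.mpr hρ1.le)) hD0]
      have : ρ * B * ρ = S * ρ ^ (2 * k) * ρ ^ 2 + D * ρ ^ 2 := by rw [hBdef]; ring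
      rw [this, hgeom]
      nlinarith
  -- conclude
  intro k
  have htr : (X k).trace = ∑ i, X k i i := rfl
  have h1 : (X k).trace ≤ (n : ℝ) * (S * ρ ^ (2 * k) + D) := by
    rw [htr]
    calc ∑ i, X k i i ≤ ∑ i, (S * ρ ^ (2 * k) + D) :=
          Finset.sum_le_sum fun i _ => le_trans (le_abs_self _) (key k i i)
      _ = (n : ℝ) * (S * ρ ^ (2 * k) + D) := by
          rw [Finset.sum_const, nsmul_eq_mul, Finset.card_univ, Fintype.card_fin]
  have hn1 : (1 : ℝ) ≤ n := by exact_mod_cast hn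
  have hρk : 0 ≤ ρ ^ (2 * k) := pow_nonneg hρ0 _
  have hgoal : (n : ℝ) * (S * ρ ^ (2 * k) + D) ≤
      9 * (n : ℝ) ^ 2 * α / (dmin * (1 - γ) ^ 3) + S * (n : ℝ) ^ 2 * ρ ^ (2 * k) := by
    have hD' : 9 * (n : ℝ) ^ 2 * α / (dmin * (1 - γ) ^ 3) = (n : ℝ) ^ 2 * D := by
      rw [hDdef]; field_simp
    rw [hD']
    have hnn : (n : ℝ) ≤ (n : ℝ) ^ 2 := by nlinarith
    nlinarith [mul_nonneg (sub_nonneg.mpr hnn) hD0,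
      mul_nonneg (sub_nonneg.mpr hnn) (mul_nonneg hS0 hρk)]
  exact h1.trans hgoal
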